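/- Let Q ⊂ ℝ^n be a full-dimensional simplicial convex polytope with 0 in its interior, with weight function a : V(Q) → ℝ_{>0}, satisfying Condition (1'): for every u ∈ V(Q) and v ∈ V(Q*), a(u)(1+⟨v,u⟩) equals either 0 or ε_Q. With the notation of Condition (1') below, one has for all k ∈ {1,…,n} and j ∈ {1,…,r}: ⟨e_k*, f_j⟩ = −a(e_k)/a(f_j) if φ(k) = j, and ⟨e_k*, f_j⟩ = 0 otherwise. -/

import Mathlib

open Matrix

/-- The polar dual `Q* = {v | ⟨v,u⟩ ≥ -1 for all u ∈ Q}`. -/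
def polarDual {n : ℕ} (Q : Set (Fin n → ℝ)) : Set (Fin n → ℝ) :=
  {v | ∀ u ∈ Q, -1 ≤ v ⬝ᵥ u}

/-- The set of numbers `a(u)(1 + ⟨v,u⟩)` for `u ∈ V(Q)`, `v ∈ V(Q*)`, `u ∉ F_v`;
`ε_Q` is its minimum. -/
def epsSet {n : ℕ} (VQ VQd : Finset (Fin n → ℝ)) (a : (Fin n → ℝ) → ℝ) : Set ℝ :=
  {x | ∃ u ∈ VQ, ∃ v ∈ VQd, v ⬝ᵥ u ≠ -1 ∧ x = a u * (1 + v ⬝ᵥ u)}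

lemma dual_expand {n : ℕ} (e estar : Fin n → (Fin n → ℝ))
    (hestar : ∀ i k, estar i ⬝ᵥ e k = if i = k then 1 else 0)
    (w x : Fin n → ℝ) : w ⬝ᵥ x = ∑ i, (w ⬝ᵥ e i) * (estar i ⬝ᵥ x) := by
  have hSE : (Matrix.of estar) * (Matrix.of e)ᵀ = 1 := by
    ext i k
    simpa [Matrix.mul_apply, Matrix.one_apply, dotProduct] using hestar i k
  have hES : (Matrix.of e)ᵀ * (Matrix.of estar) = 1 := mul_eq_one_comm.mp hSE
  have h1 : w ⬝ᵥ x = w ⬝ᵥ ((Matrix.of e)ᵀ *ᵥ ((Matrix.of estar) *ᵥ x)) := by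
    rw [Matrix.mulVec_mulVec, hES, Matrix.one_mulVec]
  rw [h1, Matrix.dotProduct_mulVec]
  simp only [dotProduct, Matrix.vecMul, Matrix.mulVec, Matrix.transpose_apply, Matrix.of_apply]

/-- Assume Condition (1'): `a(u)(1 + ⟨v,u⟩) ∈ {0, ε_Q}` for all `u ∈ V(Q)`,
`v ∈ V(Q*)`.  Fix `v ∈ V(Q*)`, let `e_1, …, e_n` be the vertices of `F_v` with dual basis
`(e_1*, …, e_n*)`, let `f_1, …, f_r` be the remaining vertices of `Q`, and for each `k` let
`F_k` be the facet adjacent to `F_v` across the ridge spanned by `{e_i : i ≠ k}`, with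
vertices `{e_i : i ≠ k} ∪ {f_{φ(k)}}` and corresponding dual vertex `v_k ∈ V(Q*)`.  Then for all `k ∈ {1,…,n}`
and `j ∈ {1,…,r}`: `⟨e_k*, f_j⟩ = -a(e_k)/a(f_j)` if `φ(k) = j`, and `⟨e_k*, f_j⟩ = 0`
otherwise. -/
theorem condition1'_dual_pairing_formula {n : ℕ} (hn : 1 ≤ n)
    (VQ VQd : Finset (Fin n → ℝ))
    -- `VQ` is the vertex set of the polytope `Q = conv(VQ)`
    (hVQ : (VQ : Set (Fin n → ℝ)) =
      Set.extremePoints ℝ (convexHull ℝ (VQ : Set (Fin n → ℝ))))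
    -- `0` lies in the interior of `Q` (in particular `Q` is full-dimensional)
    (h0 : (0 : Fin n → ℝ) ∈ interior (convexHull ℝ (VQ : Set (Fin n → ℝ))))
    -- `VQd` is the vertex set of the polar dual `Q*`
    (hVQd : (VQd : Set (Fin n → ℝ)) =
      Set.extremePoints ℝ (polarDual (convexHull ℝ (VQ : Set (Fin n → ℝ)))))
    -- `Q` is simplicial: every facet has exactly `n` vertices
    (hsimp : ∀ v ∈ VQd, (VQ.filter fun u => v ⬝ᵥ u = -1).card = n)
    -- the weight function `a : V(Q) → ℝ_{>0}`
    (a : (Fin n → ℝ) → ℝ) (ha : ∀ u ∈ VQ, 0 < a u)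
    -- `ε` is the minimum `ε_Q`
    (ε : ℝ) (hε : IsLeast (epsSet VQ VQd a) ε)
    -- Condition (1')
    (hcond : ∀ u ∈ VQ, ∀ v ∈ VQd, a u * (1 + v ⬝ᵥ u) = 0 ∨ a u * (1 + v ⬝ᵥ u) = ε)
    -- fix `v ∈ V(Q*)`; `e_1, …, e_n` are the vertices of the facet `F_v`
    (v : Fin n → ℝ) (hv : v ∈ VQd)
    (e : Fin n → (Fin n → ℝ)) (he : Function.Injective e)
    (heV : ∀ i, e i ∈ VQ) (heF : ∀ i, v ⬝ᵥ e i = -1)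
    (heAll : ∀ u ∈ VQ, v ⬝ᵥ u = -1 → ∃ i, u = e i)
    -- `(e_1*, …, e_n*)` is the dual basis of `(e_1, …, e_n)`
    (estar : Fin n → (Fin n → ℝ))
    (hestar : ∀ i k, estar i ⬝ᵥ e k = if i = k then 1 else 0)
    -- `f_1, …, f_r` are the remaining vertices of `Q`
    (r : ℕ) (f : Fin r → (Fin n → ℝ)) (hf : Function.Injective f)
    (hfV : ∀ j, f j ∈ VQ) (hef : ∀ j i, f j ≠ e i)
    (hVQef : (VQ : Set (Fin n → ℝ)) = Set.range e ∪ Set.range f)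
    -- for each `k`, `F_k` is the facet of `Q` adjacent to `F_v` across the ridge spanned by
    -- `{e_i : i ≠ k}`; its vertices are `{e_i : i ≠ k} ∪ {f_{φ(k)}}` and its corresponding
    -- dual vertex is `vk k ∈ V(Q*)`
    (φ : Fin n → Fin r) (vk : Fin n → (Fin n → ℝ))
    (hvkV : ∀ k, vk k ∈ VQd) (hvkne : ∀ k, vk k ≠ v)
    (hvke : ∀ k i, i ≠ k → vk k ⬝ᵥ e i = -1)
    (hvkf : ∀ k, vk k ⬝ᵥ f (φ k) = -1)
    (hvkAll : ∀ k, ∀ u ∈ VQ, vk k ⬝ᵥ u = -1 → (∃ i, i ≠ k ∧ u = e i) ∨ u = f (φ k)) :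
    ∀ k, ∀ j, estar k ⬝ᵥ f j = if φ k = j then -(a (e k)) / a (f j) else 0 := by

  -- ε is positive
  obtain ⟨hmem, _⟩ := hε
  obtain ⟨u0, hu0, v0, hv0, hne0, heq0⟩ := hmem
  have hεpos : 0 < ε := by
    have hv0p : v0 ∈ polarDual (convexHull ℝ (VQ : Set (Fin n → ℝ))) := by
      have h1 : v0 ∈ (VQd : Set (Fin n → ℝ)) := hv0
      rw [hVQd] at h1
      exact extremePoints_subset h1
    have hge : -1 ≤ v0 ⬝ᵥ u0 := hv0p u0 (subset_convexHull ℝ _ hu0)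
    have h1 : 0 < 1 + v0 ⬝ᵥ u0 := by
      rcases lt_or_eq_of_le hge with h | h
      · linarith
      · exact absurd h.symm hne0
    have := ha u0 hu0
    rw [heq0]; positivity
  -- pairing of v with the f j
  have hfj : ∀ j, v ⬝ᵥ f j = ε / a (f j) - 1 := by
    intro j
    have haj := (ha _ (hfV j)).ne'
    rcases hcond (f j) (hfV j) v hv with h | h
    · have h2 : v ⬝ᵥ f j = -1 := by
        rcases mul_eq_zero.mp h with h' | h'
        · exact absurd h' haj
        · linarith
      obtain ⟨i, hi⟩ := heAll (f j) (hfV j) h2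
      exact absurd hi (hef j i)
    · have h2 : 1 + v ⬝ᵥ f j = ε / a (f j) := by
        rw [eq_div_iff haj, mul_comm]; exact h
      linarith
  -- pairing of vk k with e k
  have hekk : ∀ k, vk k ⬝ᵥ e k = ε / a (e k) - 1 := by
    intro k
    have hak := (ha _ (heV k)).ne'
    rcases hcond (e k) (heV k) (vk k) (hvkV k) with h | h
    · have h2 : vk k ⬝ᵥ e k = -1 := by
        rcases mul_eq_zero.mp h with h' | h'
        · exact absurd h' hak
        · linarith
      rcases hvkAll k (e k) (heV k) h2 with ⟨i, hik, hi⟩ | h'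
      · exact absurd (he hi).symm hik
      · exact absurd h'.symm (hef (φ k) k)
    · have h2 : 1 + vk k ⬝ᵥ e k = ε / a (e k) := by
        rw [eq_div_iff hak, mul_comm]; exact h
      linarith
  -- pairing of vk k with f j for j ≠ φ k
  have hvkfj : ∀ k j, φ k ≠ j → vk k ⬝ᵥ f j = ε / a (f j) - 1 := by
    intro k j hφ
    have haj := (ha _ (hfV j)).ne'
    rcases hcond (f j) (hfV j) (vk k) (hvkV k) with h | h
    · have h2 : vk k ⬝ᵥ f j = -1 := by
        rcases mul_eq_zero.mp h with h' | h'
        · exact absurd h' haj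
        · linarith
      rcases hvkAll k (f j) (hfV j) h2 with ⟨i, _, hi⟩ | h'
      · exact absurd hi (hef j i)
      · exact absurd (hf h').symm hφ
    · have h2 : 1 + vk k ⬝ᵥ f j = ε / a (f j) := by
        rw [eq_div_iff haj, mul_comm]; exact h
      linarith
  intro k j
  set c : Fin n → ℝ := fun i => estar i ⬝ᵥ f j with hc
  have hSv : v ⬝ᵥ f j = -∑ i, c i := by
    rw [dual_expand e estar hestar v (f j)]
    rw [← Finset.sum_neg_distrib]
    exact Finset.sum_congr rfl fun i _ => by rw [heF i]; ring
  have hSk : vk k ⬝ᵥ f j = -∑ i, c i + (ε / a (e k)) * c k := by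
    rw [dual_expand e estar hestar (vk k) (f j)]
    have hterm : ∀ i ∈ Finset.univ, (vk k ⬝ᵥ e i) * c i =
        -c i + (if i = k then (ε / a (e k)) * c k else 0) := by
      intro i _
      by_cases hik : i = k
      · subst hik; rw [hekk i, if_pos rfl]; ring
      · rw [hvke k i hik, if_neg hik]; ring
    rw [Finset.sum_congr rfl hterm, Finset.sum_add_distrib, Finset.sum_neg_distrib,
      Finset.sum_ite_eq' Finset.univ k]
    simp
  have hak := (ha _ (heV k)).ne'
  have haj := (ha _ (hfV j)).ne'
  have hεne := hεpos.ne'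
  by_cases hφ : φ k = j
  · rw [if_pos hφ]
    have h1 := hvkf k
    rw [hφ] at h1
    have h2 := hfj j
    rw [hSv] at h2
    rw [hSk] at h1
    -- h1 : -∑ c + (ε/a(ek)) * c k = -1,  h2 : -∑ c = ε/a(fj) - 1
    have h3 : (ε / a (e k)) * c k = -(ε / a (f j)) := by linarith
    have h4 : ε * (c k * a (f j)) = ε * (-(a (e k))) := by
      field_simp at h3
      rw [h3]
    have h5 : c k * a (f j) = -(a (e k)) := mul_left_cancel₀ hεne h4
    rw [eq_div_iff haj]
    linarith [h5]
  · rw [if_neg hφ]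
    have h1 := hvkfj k j hφ
    have h2 := hfj j
    rw [hSv] at h2
    rw [hSk] at h1
    have h3 : (ε / a (e k)) * c k = 0 := by linarith
    rcases mul_eq_zero.mp h3 with h' | h'
    · exact absurd h' (by positivity)
    · exact h'
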